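/- Let Y be a Banach space over 𝕂, E ⊆ Y open, m a fixed parameter, and 𝒪 ⊆ E nonempty and open. Let 𝔞₁ : 𝒪 → S(V × W, 𝕂), 𝔠 : 𝒪 → S(H × W, 𝕂) and Φ : 𝒪 → W* be maps such that for each t ∈ 𝒪 the form 𝔞₁(t) satisfies the inf-sup condition with some constant c(t) > 0 and is nondegenerate in the second component, and such that for every t ∈ 𝒪 and φ ∈ W* there is exactly one u ∈ V with 𝔞₁(t)(u,w) + 𝔠(t)(ju,w) = φ(w) for all w ∈ W (strong well-posedness). Let τ : 𝒪 → V map t to the unique u ∈ V with 𝔞₁(t)(u,w) + 𝔠(t)(ju,w) = Φ(t)(w) for all w ∈ W. If Φ, 𝔞₁ and 𝔠 are n-times continuously Fréchet differentiable on 𝒪 for some n ∈ ℕ ∪ {∞}, then τ is n-times continuously Fréchet differentiable on 𝒪; if Φ, 𝔞₁ and 𝔠 are analytic on 𝒪, then τ is analytic on 𝒪. -/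

import Mathlib

set_option maxHeartbeats 1000000

open ContinuousLinearMap

/-- Analytic analogue of `contDiffAt_map_inverse`: at a continuous linear equivalence
`e : E ≃L[𝕜] F` between Banach spaces, the operation of inversion is analytic. -/
lemma analyticAt_map_inverse' {𝕜 E F : Type*} [NontriviallyNormedField 𝕜]
    [NormedAddCommGroup E] [NormedSpace 𝕜 E] [CompleteSpace E]
    [NormedAddCommGroup F] [NormedSpace 𝕜 F] (e : E ≃L[𝕜] F) :
    AnalyticAt 𝕜 ContinuousLinearMap.inverse (e : E →L[𝕜] F) := by
  let O₁ : (E →L[𝕜] E) →L[𝕜] (F →L[𝕜] E) := (compL 𝕜 F E E).flip (e.symm : F →L[𝕜] E)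
  let O₂ : (E →L[𝕜] F) →L[𝕜] (E →L[𝕜] E) := compL 𝕜 E F E (e.symm : F →L[𝕜] E)
  have heq : ContinuousLinearMap.inverse = (O₁ : (E →L[𝕜] E) → (F →L[𝕜] E)) ∘
      Ring.inverse ∘ (O₂ : (E →L[𝕜] F) → (E →L[𝕜] E)) := by
    funext f
    exact inverse_eq_ringInverse e f
  rw [heq]
  have h₂ : AnalyticAt 𝕜 (Ring.inverse ∘ (O₂ : (E →L[𝕜] F) → (E →L[𝕜] E)))
      (e : E →L[𝕜] F) := by
    refine AnalyticAt.comp ?_ (O₂.analyticAt _)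
    have : O₂ (e : E →L[𝕜] F) = (1 : E →L[𝕜] E) := by
      ext x
      simp [O₂, ContinuousLinearMap.one_def]
    rw [this]
    exact analyticAt_inverse (1 : (E →L[𝕜] E)ˣ)
  exact (O₁.analyticAt _).comp h₂

/-- Theorem 5.5 (regularity with respect to the parameter `t`): if the data maps
`Φ`, `𝔞₁` (equivalently the Lax–Milgram isomorphisms `t ↦ T_t`) and `𝔠` are
`n`-times continuously Fréchet differentiable (resp. analytic) on `𝒪` and the
problem is strongly well-posed for every `t ∈ 𝒪`, then the parameter-to-state
operator `τ` is `n`-times continuously Fréchet differentiable (resp. analytic). -/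
theorem parameter_to_state_regularity_in_t
    {𝕂 V W H Y : Type*} [RCLike 𝕂]
    [NormedAddCommGroup V] [NormedSpace 𝕂 V] [CompleteSpace V]
    [NormedAddCommGroup W] [NormedSpace 𝕂 W] [CompleteSpace W] [Nontrivial W]
    [NormedAddCommGroup H] [NormedSpace 𝕂 H] [CompleteSpace H]
    [NormedAddCommGroup Y] [NormedSpace 𝕂 Y] [CompleteSpace Y]
    (hrefl : Function.Surjective ⇑(NormedSpace.inclusionInDoubleDual 𝕂 W))
    (j : V →L[𝕂] H) (hj : Function.Injective ⇑j)
    (𝒪 : Set Y) (h𝒪open : IsOpen 𝒪) (h𝒪ne : 𝒪.Nonempty)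
    (𝔞₁ : Y → (V →L[𝕂] (W →SL[starRingEnd 𝕂] 𝕂)))
    (𝔠 : Y → (H →L[𝕂] (W →SL[starRingEnd 𝕂] 𝕂)))
    (Φ : Y → (W →SL[starRingEnd 𝕂] 𝕂))
    (c : Y → ℝ) (hc : ∀ t ∈ 𝒪, 0 < c t)
    (hinfsup : ∀ t ∈ 𝒪, ∀ v : V, c t * ‖v‖ ≤ ‖𝔞₁ t v‖)
    (hnondeg : ∀ t ∈ 𝒪, ∀ w : W, (∀ v : V, 𝔞₁ t v w = 0) → w = 0)
    (hwp : ∀ t ∈ 𝒪, ∀ φ : W →SL[starRingEnd 𝕂] 𝕂,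
      ∃! u : V, ∀ w : W, 𝔞₁ t u w + 𝔠 t (j u) w = φ w)
    (τ : Y → V)
    (hτ : ∀ t ∈ 𝒪, ∀ w : W, 𝔞₁ t (τ t) w + 𝔠 t (j (τ t)) w = Φ t w) :
    (∀ n : ℕ∞, ContDiffOn 𝕂 n Φ 𝒪 → ContDiffOn 𝕂 n 𝔞₁ 𝒪 → ContDiffOn 𝕂 n 𝔠 𝒪 →
      ContDiffOn 𝕂 n τ 𝒪) ∧
    (AnalyticOnNhd 𝕂 Φ 𝒪 → AnalyticOnNhd 𝕂 𝔞₁ 𝒪 → AnalyticOnNhd 𝕂 𝔠 𝒪 →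
      AnalyticOnNhd 𝕂 τ 𝒪) := by
  let W' := W →SL[starRingEnd 𝕂] 𝕂
  -- the combined operator
  set A : Y → (V →L[𝕂] W') := fun t => 𝔞₁ t + (𝔠 t).comp j with hA
  have hAapp : ∀ t u w, A t u w = 𝔞₁ t u w + 𝔠 t (j u) w := fun t u w => rfl
  -- for every `t ∈ 𝒪`, `A t` is bijective
  have hbij : ∀ t ∈ 𝒪, Function.Bijective (A t) := by
    intro t ht
    constructor
    · intro u u' huu'
      obtain ⟨u₀, hu₀, huniq⟩ := hwp t ht (A t u)
      have h1 : u = u₀ := huniq u fun w => by rw [← hAapp]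
      have h2 : u' = u₀ := huniq u' fun w => by rw [← hAapp, ← huu']
      rw [h1, h2]
    · intro φ
      obtain ⟨u, hu, -⟩ := hwp t ht φ
      exact ⟨u, ContinuousLinearMap.ext fun w => by rw [hAapp]; exact hu w⟩
  -- package as continuous linear equivalences
  have hEq : ∀ t ∈ 𝒪, ∃ e : V ≃L[𝕂] W', (e : V →L[𝕂] W') = A t := by
    intro t ht
    refine ⟨ContinuousLinearEquiv.ofBijective (A t)
      (LinearMap.ker_eq_bot.mpr (hbij t ht).1)
      (LinearMap.range_eq_top.mpr (hbij t ht).2), ?_⟩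
    ext v
    rfl
  -- `τ t` is given by the explicit formula `(A t).inverse (Φ t)` on `𝒪`
  have hform : ∀ t ∈ 𝒪, τ t = (A t).inverse (Φ t) := by
    intro t ht
    obtain ⟨e, he⟩ := hEq t ht
    have hAτ : A t (τ t) = Φ t := ContinuousLinearMap.ext fun w => by
      rw [hAapp]; exact hτ t ht w
    rw [← he, inverse_equiv]
    have h2 : e (τ t) = Φ t := by rw [← hAτ, ← he]; rfl
    rw [← h2]
    exact (e.symm_apply_apply (τ t)).symm
  constructor
  · -- `C^n` regularity
    intro n hΦ h𝔞 h𝔠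
    have hAreg : ContDiffOn 𝕂 n A 𝒪 := h𝔞.add (h𝔠.clm_comp contDiffOn_const)
    have : ContDiffOn 𝕂 n (fun t => (A t).inverse (Φ t)) 𝒪 := by
      intro t ht
      obtain ⟨e, he⟩ := hEq t ht
      have hAt : ContDiffAt 𝕂 n A t := (hAreg t ht).contDiffAt (h𝒪open.mem_nhds ht)
      have hinv : ContDiffAt 𝕂 n (fun t => (A t).inverse) t := by
        have := contDiffAt_map_inverse (𝕜 := 𝕂) (n := n) e
        rw [he] at this
        exact this.comp t hAt
      have hΦt : ContDiffAt 𝕂 n Φ t := (hΦ t ht).contDiffAt (h𝒪open.mem_nhds ht)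
      exact (hinv.clm_apply hΦt).contDiffWithinAt
    exact this.congr hform
  · -- analyticity
    intro hΦ h𝔞 h𝔠
    have hAreg : AnalyticOnNhd 𝕂 A 𝒪 := by
      intro t ht
      have h2 : AnalyticAt 𝕂 (fun s => ((𝔠 s).comp j : V →L[𝕂] (W →SL[starRingEnd 𝕂] 𝕂))) t := by
        have hb := ContinuousLinearMap.analyticAt_bilinear (𝕜 := 𝕂)
          (E := H →L[𝕂] (W →SL[starRingEnd 𝕂] 𝕂)) (F := V →L[𝕂] H)
          (G := V →L[𝕂] (W →SL[starRingEnd 𝕂] 𝕂))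
          (compL 𝕂 V H (W →SL[starRingEnd 𝕂] 𝕂)) (𝔠 t, j)
        exact hb.comp₂ (h𝔠 t ht) (analyticAt_const (v := j))
      exact (h𝔞 t ht).add h2
    intro t ht
    obtain ⟨e, he⟩ := hEq t ht
    have hinv : AnalyticAt 𝕂 (fun t => (A t).inverse) t := by
      have := analyticAt_map_inverse' e
      rw [he] at this
      exact this.comp (hAreg t ht)
    have happ : AnalyticAt 𝕂 (fun t => (A t).inverse (Φ t)) t := by
      have hb := ContinuousLinearMap.analyticAt_bilinear (𝕜 := 𝕂)
        (E := (W →SL[starRingEnd 𝕂] 𝕂) →L[𝕂] V)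
        (F := W →SL[starRingEnd 𝕂] 𝕂) (G := V)
        (ContinuousLinearMap.id 𝕂 (((W →SL[starRingEnd 𝕂] 𝕂) →L[𝕂] V))) ((A t).inverse, Φ t)
      exact hb.comp₂ hinv (hΦ t ht)
    refine happ.congr ?_
    filter_upwards [h𝒪open.mem_nhds ht] with s hs using (hform s hs).symm
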